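/- Noiseless bias bound for the kernel ridge estimator: let λ > 0, Φ a real n×d matrix with rows φ_1,…,φ_n ∈ ℝ^d, θ* ∈ ℝ^d, and r ∈ ℝ^n defined by r i = ⟪φ_i, θ*⟫. Let K = Φ Φᵀ, and for x ∈ ℝ^d let v = Φ x. Then |⟪x, θ*⟫ - vᵀ (K + λ•1)⁻¹ r| ≤ ‖θ*‖ * Real.sqrt (⟪x, x⟫ - vᵀ (K + λ•1)⁻¹ v). -/

import Mathlib

open Matrix Finset

theorem noiseless_bias_bound (n d : ℕ) (lam : ℝ) (hlam : 0 < lam)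
    (Φ : Matrix (Fin n) (Fin d) ℝ) (θs : Fin d → ℝ) (x : Fin d → ℝ)
    (r : Fin n → ℝ) (hr : ∀ i, r i = Φ i ⬝ᵥ θs) :
    |x ⬝ᵥ θs -
        (Φ *ᵥ x) ⬝ᵥ ((Φ * Φᵀ + lam • (1 : Matrix (Fin n) (Fin n) ℝ))⁻¹ *ᵥ r)| ≤
      Real.sqrt (∑ j, (θs j) ^ 2) *
        Real.sqrt (x ⬝ᵥ x -
          (Φ *ᵥ x) ⬝ᵥ ((Φ * Φᵀ + lam • (1 : Matrix (Fin n) (Fin n) ℝ))⁻¹ *ᵥ (Φ *ᵥ x))) := by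
  set A : Matrix (Fin n) (Fin n) ℝ := Φ * Φᵀ + lam • 1 with hAdef
  have hPSD : (Φ * Φᵀ).PosSemidef := by
    simpa using Matrix.posSemidef_self_mul_conjTranspose Φ
  have hApd : A.PosDef := by
    refine Matrix.PosDef.of_dotProduct_mulVec_pos ?_ (fun y hy => ?_)
    · have h1 : (Φ * Φᵀ).IsHermitian := hPSD.1
      have h2 : (lam • (1 : Matrix (Fin n) (Fin n) ℝ)).IsHermitian := by
        simp [Matrix.IsHermitian]
      exact h1.add h2
    · have h1 : 0 ≤ star y ⬝ᵥ ((Φ * Φᵀ) *ᵥ y) := hPSD.dotProduct_mulVec_nonneg y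
      have h2 : (0:ℝ) < y ⬝ᵥ y := by
        have : y ⬝ᵥ y = ∑ i, y i ^ 2 := by simp [dotProduct, sq]
        rw [this]
        have : ∃ i, y i ≠ 0 := Function.ne_iff.mp hy
        obtain ⟨i, hi⟩ := this
        exact Finset.sum_pos' (fun j _ => sq_nonneg _)
          ⟨i, Finset.mem_univ i, by positivity⟩
      have : star y ⬝ᵥ (A *ᵥ y) = star y ⬝ᵥ ((Φ * Φᵀ) *ᵥ y) + lam * (y ⬝ᵥ y) := by
        simp [hAdef, Matrix.add_mulVec, Matrix.smul_mulVec, dotProduct_add,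
          dotProduct_smul, smul_eq_mul]
      rw [this]
      have := mul_pos hlam h2
      linarith
  have hdet : IsUnit A.det := hApd.det_pos.ne'.isUnit
  have hAA : A * A⁻¹ = 1 := Matrix.mul_nonsing_inv A hdet
  have hAsymm : Aᵀ = A := hApd.1
  have hAinvsymm : (A⁻¹)ᵀ = A⁻¹ := by
    rw [Matrix.transpose_nonsing_inv, hAsymm]
  set v : Fin n → ℝ := Φ *ᵥ x with hv
  set w : Fin n → ℝ := A⁻¹ *ᵥ v with hw
  have hvecmul : ∀ z : Fin n → ℝ, v ⬝ᵥ (A⁻¹ *ᵥ z) = w ⬝ᵥ z := by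
    intro z
    rw [Matrix.dotProduct_mulVec]
    congr 1
    rw [← Matrix.mulVec_transpose, hAinvsymm, hw]
  have hrv : r = Φ *ᵥ θs := funext fun i => hr i
  -- the prediction equals (Φᵀ *ᵥ w) ⬝ᵥ θs
  have hpred : v ⬝ᵥ (A⁻¹ *ᵥ r) = (Φᵀ *ᵥ w) ⬝ᵥ θs := by
    rw [hvecmul, hrv, Matrix.dotProduct_mulVec, ← Matrix.mulVec_transpose]
  set u : Fin d → ℝ := x - Φᵀ *ᵥ w with hu
  have hlhs : x ⬝ᵥ θs - v ⬝ᵥ (A⁻¹ *ᵥ r) = u ⬝ᵥ θs := by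
    rw [hpred, hu, sub_dotProduct]
  -- quadratic identities
  have hAw : A *ᵥ w = v := by
    rw [hw, Matrix.mulVec_mulVec, hAA, Matrix.one_mulVec]
  have hPhiTw_x : (Φᵀ *ᵥ w) ⬝ᵥ x = w ⬝ᵥ v := by
    rw [Matrix.mulVec_transpose, ← Matrix.dotProduct_mulVec, ← hv]
  have key : ∀ (y : Fin d → ℝ), w ⬝ᵥ (Φ *ᵥ y) = (Φᵀ *ᵥ w) ⬝ᵥ y := fun y => by
    rw [Matrix.dotProduct_mulVec, ← Matrix.mulVec_transpose]
  have hPhiTw_sq : (Φᵀ *ᵥ w) ⬝ᵥ (Φᵀ *ᵥ w) = w ⬝ᵥ v - lam * (w ⬝ᵥ w) := by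
    have h1 : (Φᵀ *ᵥ w) ⬝ᵥ (Φᵀ *ᵥ w) = w ⬝ᵥ ((Φ * Φᵀ) *ᵥ w) :=
      (key (Φᵀ *ᵥ w)).symm.trans (by congr 1; exact Matrix.mulVec_mulVec w Φ Φᵀ)
    have hdummy : True := trivial
    have h2 : w ⬝ᵥ (A *ᵥ w) = w ⬝ᵥ ((Φ * Φᵀ) *ᵥ w) + lam * (w ⬝ᵥ w) := by
      simp [hAdef, Matrix.add_mulVec, Matrix.smul_mulVec, dotProduct_add,
        dotProduct_smul, smul_eq_mul]
    have h3 : w ⬝ᵥ (A *ᵥ w) = w ⬝ᵥ v := by rw [hAw]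
    rw [h1]; linarith
  have huu : u ⬝ᵥ u = x ⬝ᵥ x - w ⬝ᵥ v - lam * (w ⬝ᵥ w) := by
    have hx_PhiTw : x ⬝ᵥ (Φᵀ *ᵥ w) = w ⬝ᵥ v := by
      rw [dotProduct_comm]; exact hPhiTw_x
    rw [hu, sub_dotProduct, dotProduct_sub, dotProduct_sub,
      hx_PhiTw, hPhiTw_x, hPhiTw_sq]
    ring
  have hvAv : v ⬝ᵥ (A⁻¹ *ᵥ v) = w ⬝ᵥ v := hvecmul v
  have huu_le : u ⬝ᵥ u ≤ x ⬝ᵥ x - v ⬝ᵥ (A⁻¹ *ᵥ v) := by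
    rw [huu, hvAv]
    have h2 : (0:ℝ) ≤ w ⬝ᵥ w := by
      have : w ⬝ᵥ w = ∑ i, w i ^ 2 := by simp [dotProduct, sq]
      rw [this]; exact Finset.sum_nonneg fun i _ => sq_nonneg _
    nlinarith
  -- Cauchy-Schwarz
  have hcs : (u ⬝ᵥ θs) ^ 2 ≤ (∑ j, (θs j) ^ 2) * (u ⬝ᵥ u) := by
    have : u ⬝ᵥ θs = ∑ j, θs j * u j := by
      simp [dotProduct, mul_comm]
    rw [this]
    have huusum : u ⬝ᵥ u = ∑ j, (u j) ^ 2 := by simp [dotProduct, sq]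
    rw [huusum]
    exact Finset.sum_mul_sq_le_sq_mul_sq Finset.univ θs u
  rw [hlhs]
  have h1 : |u ⬝ᵥ θs| ≤ Real.sqrt ((∑ j, (θs j) ^ 2) * (u ⬝ᵥ u)) := by
    rw [← Real.sqrt_sq_eq_abs]
    exact Real.sqrt_le_sqrt hcs
  have hθnn : (0:ℝ) ≤ ∑ j, (θs j) ^ 2 := Finset.sum_nonneg fun j _ => sq_nonneg _
  calc |u ⬝ᵥ θs| ≤ Real.sqrt ((∑ j, (θs j) ^ 2) * (u ⬝ᵥ u)) := h1
    _ = Real.sqrt (∑ j, (θs j) ^ 2) * Real.sqrt (u ⬝ᵥ u) := Real.sqrt_mul hθnn _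
    _ ≤ Real.sqrt (∑ j, (θs j) ^ 2) * Real.sqrt (x ⬝ᵥ x - v ⬝ᵥ (A⁻¹ *ᵥ v)) := by
        exact mul_le_mul_of_nonneg_left (Real.sqrt_le_sqrt huu_le) (Real.sqrt_nonneg _)
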